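/- In a finite tree quiver with a distinguished subset J of 'injective' vertices containing all sources, there exists a source x such that the smallest full connected subquiver G containing x, closed under predecessors, closed under immediate successors of vertices of J in G, satisfies: every immediate predecessor of a vertex of J ∩ G lies in J. -/

import Mathlib

/-!
STATEMENT 9: combinatorial abstraction of Lemma 3.2 (existence of admissible sinks).
`Q` is a finite quiver whose underlying graph is a tree, with no oriented cycles;
`J ⊆ Q₀` is a set of marked ("injective") vertices containing all sources.  The closure
`G(x)` of a source `x` is the smallest set of vertices containing `x` closed under taking
predecessors and under adding all targets of arrows out of marked vertices of the set.
The claim: some source `x` has the property that every immediate predecessor of a marked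
vertex of `G(x)` is marked.
-/

/-- `S` is closed under predecessors, and under immediate successors of marked vertices. -/
def IsClosedUnder {V : Type*} (E : V → V → Prop) (J S : Set V) : Prop :=
  (∀ a b : V, E a b → b ∈ S → a ∈ S) ∧ (∀ v w : V, v ∈ S → v ∈ J → E v w → w ∈ S)

/-- The closure `G(x)`: the smallest subset containing `x` which is closed under
predecessors and under immediate successors of marked vertices. -/
def quiverClosure {V : Type*} (E : V → V → Prop) (J : Set V) (x : V) : Set V :=
  ⋂₀ {S : Set V | x ∈ S ∧ IsClosedUnder E J S}


section Aux
variable {V : Type*} {E : V → V → Prop} {J : Set V}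

lemma mem_quiverClosure_self (x : V) : x ∈ quiverClosure E J x :=
  fun _ hS => hS.1

lemma quiverClosure_subset {x : V} {S : Set V} (hx : x ∈ S) (hS : IsClosedUnder E J S) :
    quiverClosure E J x ⊆ S :=
  Set.sInter_subset_of_mem ⟨hx, hS⟩

lemma quiverClosure_closed (x : V) : IsClosedUnder E J (quiverClosure E J x) := by
  constructor
  · intro a b hab hb S hS
    exact hS.2.1 a b hab (hb S hS)
  · intro v w hv hvJ hvw S hS
    exact hS.2.2 v w (hv S hS) hvJ hvw

lemma reflTransGen_mem_quiverClosure {x a b : V} (h : Relation.ReflTransGen E a b)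
    (hb : b ∈ quiverClosure E J x) : a ∈ quiverClosure E J x := by
  induction h using Relation.ReflTransGen.head_induction_on with
  | refl => exact hb
  | head hac _ ih => exact (quiverClosure_closed x).1 _ _ hac ih

lemma exists_source_reaching [Finite V] (hacyclic : ∀ v : V, ¬ Relation.TransGen E v v)
    (n : V) : ∃ y : V, (∀ u : V, ¬ E u y) ∧ Relation.ReflTransGen E y n := by
  have hwf : WellFounded (Relation.TransGen E) := by
    have : IsIrrefl V (Relation.TransGen E) := ⟨hacyclic⟩
    exact Finite.wellFounded_of_trans_of_irrefl _
  induction n using hwf.induction with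
  | _ n ih =>
    by_cases h : ∀ u : V, ¬ E u n
    · exact ⟨n, h, Relation.ReflTransGen.refl⟩
    · push_neg at h
      obtain ⟨m, hm⟩ := h
      obtain ⟨y, hy1, hy2⟩ := ih m (Relation.TransGen.single hm)
      exact ⟨y, hy1, hy2.trans (Relation.ReflTransGen.single hm)⟩

open SimpleGraph Relation in
lemma reach_avoiding (hacyclic : ∀ v : V, ¬ Relation.TransGen E v v)
    {n v : V} (hnv : E n v) {a : V} (h : Relation.ReflTransGen E a n) :
    ((fromRel E) \ fromEdgeSet {s(n, v)}).Reachable a n := by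
  induction h using Relation.ReflTransGen.head_induction_on with
  | refl => exact Reachable.refl n
  | @head a c hac hcn ih =>
    refine (Adj.reachable ?_).trans ih
    have hne : a ≠ c := fun h => by subst h; exact hacyclic a (TransGen.single hac)
    rw [sdiff_adj]
    refine ⟨(fromRel_adj E a c).2 ⟨hne, Or.inl hac⟩, ?_⟩
    rw [fromEdgeSet_adj]
    rintro ⟨he, -⟩
    rw [Set.mem_singleton_iff, Sym2.eq_iff] at he
    rcases he with ⟨rfl, rfl⟩ | ⟨rfl, rfl⟩
    · exact hacyclic c (TransGen.tail' hcn hnv)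
    · exact hacyclic a (TransGen.head hac (TransGen.single hnv))

end Aux

/-- In a finite tree quiver with a distinguished set `J` of vertices containing all
sources, there is a source `x` whose closure `G(x)` satisfies: every immediate
predecessor of a vertex of `J ∩ G(x)` lies in `J`. -/
theorem exists_source_with_good_closure
    {V : Type*} [Finite V] [Nonempty V]
    (E : V → V → Prop)
    -- the underlying graph of the quiver is a tree
    (htree : (SimpleGraph.fromRel E).IsTree)
    -- no oriented cycles
    (hacyclic : ∀ v : V, ¬ Relation.TransGen E v v)
    (J : Set V)
    -- `J` contains all sources
    (hsources : ∀ v : V, (∀ u : V, ¬ E u v) → v ∈ J) :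
    ∃ x : V, (∀ u : V, ¬ E u x) ∧ x ∈ J ∧
      ∀ n v : V, E n v → v ∈ quiverClosure E J x → v ∈ J → n ∈ J := by
  classical
  obtain ⟨x₀, hx₀, -⟩ := exists_source_reaching hacyclic (Classical.arbitrary V)
  obtain ⟨x, hxS, hxmin⟩ := Set.exists_min_image {x : V | ∀ u, ¬ E u x}
      (fun x => (quiverClosure E J x).ncard) (Set.toFinite _) ⟨x₀, hx₀⟩
  refine ⟨x, hxS, hsources x hxS, ?_⟩
  intro n v hnv hvG hvJ
  by_contra hnJ
  set G := SimpleGraph.fromRel E with hG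
  set G' := G \ SimpleGraph.fromEdgeSet {s(n, v)} with hG'
  have hnG : n ∈ quiverClosure E J x := (quiverClosure_closed x).1 n v hnv hvG
  obtain ⟨y, hySrc, hyn⟩ := exists_source_reaching hacyclic n
  have hyG : y ∈ quiverClosure E J x := reflTransGen_mem_quiverClosure hyn hnG
  have hreach : G'.Reachable y n := reach_avoiding hacyclic hnv hyn
  have hnev : n ≠ v := fun h => by subst h; exact hacyclic _ (Relation.TransGen.single hnv)
  have hAdj : G.Adj n v := (SimpleGraph.fromRel_adj E n v).2 ⟨hnev, Or.inl hnv⟩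
  have hbridge : ¬ G'.Reachable n v :=
    (SimpleGraph.isBridge_iff.1
      ((SimpleGraph.isAcyclic_iff_forall_adj_isBridge.1 htree.IsAcyclic) hAdj))
  set S : Set V := {w | G'.Reachable n w} with hS
  have hnS : n ∈ S := SimpleGraph.Reachable.refl n
  have hyS : y ∈ S := hreach.symm
  have hvS : v ∉ S := hbridge
  have hcross : ∀ a b : V, G.Adj a b → a ∈ S → b ∉ S → s(a, b) = s(n, v) := by
    intro a b hab haS hbS
    by_contra hne'
    refine hbS (SimpleGraph.Reachable.trans haS (SimpleGraph.Adj.reachable ?_))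
    rw [hG', SimpleGraph.sdiff_adj]
    refine ⟨hab, ?_⟩
    rw [SimpleGraph.fromEdgeSet_adj]
    rintro ⟨he, -⟩
    exact hne' (Set.mem_singleton_iff.1 he)
  have hclosed : IsClosedUnder E J S := by
    constructor
    · intro a b hab hbS
      by_contra haS
      have hne2 : b ≠ a := fun h => by subst h; exact hacyclic _ (Relation.TransGen.single hab)
      have hcr := hcross b a ((SimpleGraph.fromRel_adj E b a).2 ⟨hne2, Or.inr hab⟩) hbS haS
      rw [Sym2.eq_iff] at hcr
      rcases hcr with ⟨rfl, rfl⟩ | ⟨rfl, rfl⟩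
      · exact hacyclic a (Relation.TransGen.head hab (Relation.TransGen.single hnv))
      · exact haS hnS
    · intro w u hwS hwJ hwu
      by_contra huS
      have hne2 : w ≠ u := fun h => by subst h; exact hacyclic _ (Relation.TransGen.single hwu)
      have hcr := hcross w u ((SimpleGraph.fromRel_adj E w u).2 ⟨hne2, Or.inl hwu⟩) hwS huS
      rw [Sym2.eq_iff] at hcr
      rcases hcr with ⟨rfl, rfl⟩ | ⟨rfl, rfl⟩
      · exact hnJ hwJ
      · exact hvS hwS
  have hsub : quiverClosure E J y ⊆ S := quiverClosure_subset hyS hclosed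
  have hvy : v ∉ quiverClosure E J y := fun h => hvS (hsub h)
  have hsub2 : quiverClosure E J y ⊆ quiverClosure E J x :=
    quiverClosure_subset hyG (quiverClosure_closed x)
  have hlt : (quiverClosure E J y).ncard < (quiverClosure E J x).ncard :=
    Set.ncard_lt_ncard ((Set.ssubset_iff_of_subset hsub2).2 ⟨v, hvG, hvy⟩) (Set.toFinite _)
  exact absurd (hxmin y hySrc) (not_le.2 hlt)
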